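/- Define the stable set W^s = {(x,v) ∈ ℝⁿ×ℝⁿ : (X(t,x,v),V(t,x,v)) → (0,0) as t → ∞} for the flow X′ = V, V′ = X − F(t,X) with F continuous and |F(t,y)| ≤ A e^{−t}. Then W^s = {(x,v) : x + v = ∫₀^∞ e^{−s} F(s, X(s,x,v)) ds}. -/

import Mathlib

open MeasureTheory Filter

/-- The Euclidean norm on `Fin n → ℝ`. -/
noncomputable def euclNorm {n : ℕ} (x : Fin n → ℝ) : ℝ := Real.sqrt (∑ i, x i ^ 2)

lemma norm_le_euclNorm {n : ℕ} (x : Fin n → ℝ) : ‖x‖ ≤ euclNorm x := by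
  rw [euclNorm, pi_norm_le_iff_of_nonneg (Real.sqrt_nonneg _)]
  intro i
  rw [Real.norm_eq_abs, ← Real.sqrt_sq_eq_abs]
  exact Real.sqrt_le_sqrt (Finset.single_le_sum (fun j _ => sq_nonneg (x j)) (Finset.mem_univ i))

lemma tendsto_exp_neg_two_mul : Tendsto (fun r : ℝ => Real.exp (-2 * r)) atTop (nhds 0) := by
  have h : Tendsto (fun r : ℝ => 2 * r) atTop atTop :=
    (tendsto_id (α := ℝ)).const_mul_atTop two_pos
  have := Real.tendsto_exp_neg_atTop_nhds_zero.comp h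
  have he : ((fun x : ℝ => Real.exp (-x)) ∘ fun r : ℝ => 2 * r)
      = fun r : ℝ => Real.exp (-2 * r) := by
    ext r; simp [Function.comp, neg_mul]
  rwa [he] at this

/-- the stable set
`W^s = {(x,v) : (X(t,x,v),V(t,x,v)) → (0,0)}` of the flow `X′ = V, V′ = X − F(t,X)`
(with `F` continuous and `|F(t,y)| ≤ A e^{−t}`) equals
`{(x,v) : x + v = ∫₀^∞ e^{−s} F(s,X(s,x,v)) ds}`. -/
theorem stmt16 {n : ℕ} (F : ℝ → (Fin n → ℝ) → (Fin n → ℝ))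
    (hF : Continuous (fun p : ℝ × (Fin n → ℝ) => F p.1 p.2))
    (A : ℝ) (hA : 0 < A)
    (hFbound : ∀ t : ℝ, 0 ≤ t → ∀ y : Fin n → ℝ, euclNorm (F t y) ≤ A * Real.exp (-t))
    (X V : (Fin n → ℝ) → (Fin n → ℝ) → ℝ → Fin n → ℝ)
    (hX0 : ∀ x v, X x v 0 = x) (hV0 : ∀ x v, V x v 0 = v)
    (hX : ∀ x v, ∀ t : ℝ, 0 ≤ t → HasDerivAt (X x v) (V x v t) t)
    (hV : ∀ x v, ∀ t : ℝ, 0 ≤ t →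
      HasDerivAt (V x v) (X x v t - F t (X x v t)) t) :
    {p : (Fin n → ℝ) × (Fin n → ℝ) |
        Tendsto (fun t => (X p.1 p.2 t, V p.1 p.2 t)) atTop (nhds (0, 0))}
      = {p : (Fin n → ℝ) × (Fin n → ℝ) |
          p.1 + p.2 = ∫ s in Set.Ioi (0:ℝ), Real.exp (-s) • F s (X p.1 p.2 s)} := by
  ext ⟨x, v⟩
  simp only [Set.mem_setOf_eq]
  set Xf : ℝ → Fin n → ℝ := X x v with hXf
  set Vf : ℝ → Fin n → ℝ := V x v with hVf
  set G : ℝ → Fin n → ℝ := fun s => F s (Xf s) with hG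
  set GI : ℝ → Fin n → ℝ := fun s => Real.exp (-s) • G s with hGI
  have hXf0 : Xf 0 = x := hX0 x v
  have hVf0 : Vf 0 = v := hV0 x v
  have contX : ∀ s : ℝ, 0 ≤ s → ContinuousAt Xf s := fun s hs => (hX x v s hs).continuousAt
  have contG : ∀ s : ℝ, 0 ≤ s → ContinuousAt G s := fun s hs =>
    (hF.continuousAt).comp ((continuousAt_id.prodMk (contX s hs)))
  have contGI : ∀ s : ℝ, 0 ≤ s → ContinuousAt GI s := fun s hs =>
    ((Real.continuous_exp.comp continuous_neg).continuousAt).smul (contG s hs)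
  have boundG : ∀ s : ℝ, 0 ≤ s → ‖G s‖ ≤ A * Real.exp (-s) := fun s hs =>
    (norm_le_euclNorm _).trans (hFbound s hs _)
  have boundGI : ∀ s : ℝ, 0 ≤ s → ‖GI s‖ ≤ A * Real.exp (-2 * s) := by
    intro s hs
    have h1 : ‖GI s‖ = Real.exp (-s) * ‖G s‖ := by
      rw [hGI]; simp [norm_smul, Real.abs_exp]
    rw [h1]
    calc Real.exp (-s) * ‖G s‖ ≤ Real.exp (-s) * (A * Real.exp (-s)) :=
          mul_le_mul_of_nonneg_left (boundG s hs) (Real.exp_pos _).le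
      _ = A * Real.exp (-2 * s) := by
          rw [show (-2:ℝ) * s = -s + -s by ring, Real.exp_add]; ring
  -- integrability of GI on Ioi 0
  have measGI : AEStronglyMeasurable GI (volume.restrict (Set.Ioi (0:ℝ))) := by
    apply ContinuousOn.aestronglyMeasurable _ measurableSet_Ioi
    intro s hs
    exact (contGI s (le_of_lt hs)).continuousWithinAt
  have intbound : IntegrableOn (fun s : ℝ => A * Real.exp (-2 * s)) (Set.Ioi (0:ℝ)) :=
    (exp_neg_integrableOn_Ioi 0 (by norm_num : (0:ℝ) < 2)).const_mul A
  have intGI : IntegrableOn GI (Set.Ioi (0:ℝ)) := by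
    apply Integrable.mono' intbound measGI
    filter_upwards [ae_restrict_mem measurableSet_Ioi] with s hs
    exact boundGI s (le_of_lt hs)
  have intGIt : ∀ t : ℝ, 0 ≤ t → IntegrableOn GI (Set.Ioi t) :=
    fun t ht => intGI.mono_set (Set.Ioi_subset_Ioi ht)
  have intervalGI : ∀ t : ℝ, 0 ≤ t → IntervalIntegrable GI volume 0 t := by
    intro t ht
    apply ContinuousOn.intervalIntegrable
    intro s hs
    rw [Set.uIcc_of_le ht] at hs
    exact (contGI s hs.1).continuousWithinAt
  -- the fundamental formula for u = X + V
  have formulaU : ∀ t : ℝ, 0 ≤ t →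
      Real.exp (-t) • (Xf t + Vf t) = (x + v) - ∫ s in (0:ℝ)..t, GI s := by
    intro t ht
    have key : (∫ s in (0:ℝ)..t, -GI s)
        = Real.exp (-t) • (Xf t + Vf t) - Real.exp (-(0:ℝ)) • (Xf 0 + Vf 0) := by
      apply intervalIntegral.integral_eq_sub_of_hasDerivAt
      · intro s hs
        rw [Set.uIcc_of_le ht] at hs
        have hexp : HasDerivAt (fun r : ℝ => Real.exp (-r)) (Real.exp (-s) * (-1)) s :=
          (Real.hasDerivAt_exp (-s)).comp s (hasDerivAt_neg s)
        have hsum : HasDerivAt (fun r => Xf r + Vf r)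
            (Vf s + (Xf s - F s (Xf s))) s := (hX x v s hs.1).add (hV x v s hs.1)
        have hder := hexp.smul hsum
        have heq : Real.exp (-s) • (Vf s + (Xf s - F s (Xf s)))
            + (Real.exp (-s) * (-1)) • (Xf s + Vf s) = -GI s := by
          simp only [hGI, hG]
          module
        rw [heq] at hder
        exact hder
      · exact (intervalGI t ht).neg
    rw [intervalIntegral.integral_neg, hXf0, hVf0, neg_zero, Real.exp_zero, one_smul] at key
    linear_combination (norm := module) -key
  -- the fundamental formula for w = X - V
  have formulaW : ∀ t : ℝ, 0 ≤ t →
      Real.exp t • (Xf t - Vf t) = (x - v) + ∫ s in (0:ℝ)..t, Real.exp s • G s := by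
    intro t ht
    have key : (∫ s in (0:ℝ)..t, Real.exp s • G s)
        = Real.exp t • (Xf t - Vf t) - Real.exp (0:ℝ) • (Xf 0 - Vf 0) := by
      apply intervalIntegral.integral_eq_sub_of_hasDerivAt
      · intro s hs
        rw [Set.uIcc_of_le ht] at hs
        have hexp : HasDerivAt Real.exp (Real.exp s) s := Real.hasDerivAt_exp s
        have hdiff : HasDerivAt (fun r => Xf r - Vf r)
            (Vf s - (Xf s - F s (Xf s))) s := (hX x v s hs.1).sub (hV x v s hs.1)
        have hder := hexp.smul hdiff
        have heq : Real.exp s • (Vf s - (Xf s - F s (Xf s)))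
            + Real.exp s • (Xf s - Vf s) = Real.exp s • G s := by
          simp only [hG]
          module
        rw [heq] at hder
        exact hder
      · apply ContinuousOn.intervalIntegrable
        intro s hs
        rw [Set.uIcc_of_le ht] at hs
        exact ((Real.continuous_exp.continuousAt).smul (contG s hs.1)).continuousWithinAt
    rw [hXf0, hVf0, Real.exp_zero, one_smul] at key
    linear_combination (norm := module) -key
  -- w = X - V tends to 0 always
  have tendW : Tendsto (fun t => Xf t - Vf t) atTop (nhds 0) := by
    apply squeeze_zero_norm' (a := fun t => ‖x - v‖ * Real.exp (-t) + A * (t * Real.exp (-t)))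
    · filter_upwards [eventually_ge_atTop (0:ℝ)] with t ht
      have hw : Xf t - Vf t
          = Real.exp (-t) • ((x - v) + ∫ s in (0:ℝ)..t, Real.exp s • G s) := by
        rw [← formulaW t ht, smul_smul, ← Real.exp_add]
        simp
      have hnorm : ‖∫ s in (0:ℝ)..t, Real.exp s • G s‖ ≤ A * t := by
        have hb : ∀ s ∈ Set.uIoc (0:ℝ) t, ‖Real.exp s • G s‖ ≤ A := by
          intro s hs
          rw [Set.uIoc_of_le ht] at hs
          rw [norm_smul, Real.norm_eq_abs, Real.abs_exp]
          calc Real.exp s * ‖G s‖ ≤ Real.exp s * (A * Real.exp (-s)) :=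
                mul_le_mul_of_nonneg_left (boundG s hs.1.le) (Real.exp_pos _).le
            _ = A := by
                rw [show Real.exp s * (A * Real.exp (-s)) = A * (Real.exp s * Real.exp (-s))
                  by ring, ← Real.exp_add]
                simp
        have := intervalIntegral.norm_integral_le_of_norm_le_const hb
        simpa [abs_of_nonneg ht] using this
      calc ‖Xf t - Vf t‖
          = Real.exp (-t) * ‖(x - v) + ∫ s in (0:ℝ)..t, Real.exp s • G s‖ := by
            rw [hw, norm_smul, Real.norm_eq_abs, Real.abs_exp]
        _ ≤ Real.exp (-t) * (‖x - v‖ + A * t) :=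
            mul_le_mul_of_nonneg_left ((norm_add_le _ _).trans (by gcongr))
              (Real.exp_pos _).le
        _ = ‖x - v‖ * Real.exp (-t) + A * (t * Real.exp (-t)) := by ring
    · have h1 : Tendsto (fun t : ℝ => ‖x - v‖ * Real.exp (-t)) atTop (nhds 0) := by
        simpa using Real.tendsto_exp_neg_atTop_nhds_zero.const_mul ‖x - v‖
      have h2 : Tendsto (fun t : ℝ => A * (t * Real.exp (-t))) atTop (nhds 0) := by
        have := (Real.tendsto_pow_mul_exp_neg_atTop_nhds_zero 1).const_mul A
        simpa using this
      simpa using h1.add h2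
  -- split of the improper integral
  have isplit : ∀ t : ℝ, 0 ≤ t →
      (∫ s in Set.Ioi (0:ℝ), GI s) = (∫ s in (0:ℝ)..t, GI s) + ∫ s in Set.Ioi t, GI s := by
    intro t ht
    rw [intervalIntegral.integral_of_le ht, ← Set.Ioc_union_Ioi_eq_Ioi ht,
      setIntegral_union (Set.Ioc_disjoint_Ioi le_rfl) measurableSet_Ioi
        (intGI.mono_set Set.Ioc_subset_Ioi_self) (intGIt t ht)]
  -- value of the tail bound integral
  have tailval : ∀ t : ℝ,
      (∫ s in Set.Ioi t, A * Real.exp (-2 * s)) = A / 2 * Real.exp (-2 * t) := by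
    intro t
    have hderiv : ∀ s ∈ Set.Ioi t, HasDerivAt (fun r : ℝ => -(A / 2) * Real.exp (-2 * r))
        (A * Real.exp (-2 * s)) s := by
      intro s _
      have hlin : HasDerivAt (fun r : ℝ => -2 * r) (-2 : ℝ) s := by
        simpa using (hasDerivAt_id s).const_mul (-2 : ℝ)
      have h1 : HasDerivAt (fun r : ℝ => Real.exp (-2 * r)) (Real.exp (-2 * s) * (-2)) s :=
        hlin.exp
      have := h1.const_mul (-(A / 2))
      rw [show A * Real.exp (-2 * s) = -(A / 2) * (Real.exp (-2 * s) * -2) by ring]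
      exact this
    have hint : IntegrableOn (fun s : ℝ => A * Real.exp (-2 * s)) (Set.Ioi t) :=
      (exp_neg_integrableOn_Ioi t (by norm_num : (0:ℝ) < 2)).const_mul A
    have htend : Tendsto (fun r : ℝ => -(A / 2) * Real.exp (-2 * r)) atTop (nhds 0) := by
      simpa using tendsto_exp_neg_two_mul.const_mul (-(A / 2))
    have hcont : ContinuousWithinAt (fun r : ℝ => -(A / 2) * Real.exp (-2 * r)) (Set.Ici t) t :=
      (continuous_const.mul (Real.continuous_exp.comp
        (continuous_const.mul continuous_id))).continuousWithinAt
    rw [integral_Ioi_of_hasDerivAt_of_tendsto hcont hderiv hint htend]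
    ring
  constructor
  · -- forward: tendsto → equality
    intro htend
    have hu : Tendsto (fun t => Xf t + Vf t) atTop (nhds 0) := by
      have h := (continuous_fst.add continuous_snd).tendsto
        ((0, 0) : (Fin n → ℝ) × (Fin n → ℝ))
      simpa [Function.comp_def] using h.comp htend
    have h1 : Tendsto (fun t => Real.exp (-t) • (Xf t + Vf t)) atTop (nhds 0) := by
      have := Real.tendsto_exp_neg_atTop_nhds_zero.smul hu
      simpa using this
    have h2 : Tendsto (fun t => (x + v) - ∫ s in (0:ℝ)..t, GI s) atTop
        (nhds ((x + v) - ∫ s in Set.Ioi (0:ℝ), GI s)) :=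
      tendsto_const_nhds.sub (intervalIntegral_tendsto_integral_Ioi 0 intGI tendsto_id)
    have heq : (fun t => Real.exp (-t) • (Xf t + Vf t)) =ᶠ[atTop]
        (fun t => (x + v) - ∫ s in (0:ℝ)..t, GI s) := by
      filter_upwards [eventually_ge_atTop (0:ℝ)] with t ht using formulaU t ht
    have := tendsto_nhds_unique (h1.congr' heq) h2
    exact sub_eq_zero.mp this.symm
  · -- backward: equality → tendsto
    intro heq
    have tendU : Tendsto (fun t => Xf t + Vf t) atTop (nhds 0) := by
      apply squeeze_zero_norm' (a := fun t => A / 2 * Real.exp (-t))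
      · filter_upwards [eventually_ge_atTop (0:ℝ)] with t ht
        have hu : Xf t + Vf t = Real.exp t • ((x + v) - ∫ s in (0:ℝ)..t, GI s) := by
          have h := congrArg (fun z => Real.exp t • z) (formulaU t ht)
          simp only [smul_smul, ← Real.exp_add, add_neg_cancel, Real.exp_zero, one_smul] at h
          exact h
        have htail : (x + v) - (∫ s in (0:ℝ)..t, GI s) = ∫ s in Set.Ioi t, GI s := by
          rw [heq, isplit t ht]; abel
        rw [hu, htail, norm_smul, Real.norm_eq_abs, Real.abs_exp]
        have hnorm : ‖∫ s in Set.Ioi t, GI s‖ ≤ A / 2 * Real.exp (-2 * t) := by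
          rw [← tailval t]
          apply norm_integral_le_of_norm_le (intbound.mono_set (Set.Ioi_subset_Ioi ht))
          filter_upwards [ae_restrict_mem measurableSet_Ioi] with s hs
          exact boundGI s (ht.trans hs.le)
        calc Real.exp t * ‖∫ s in Set.Ioi t, GI s‖
            ≤ Real.exp t * (A / 2 * Real.exp (-2 * t)) :=
              mul_le_mul_of_nonneg_left hnorm (Real.exp_pos _).le
          _ = A / 2 * Real.exp (-t) := by
              rw [show Real.exp t * (A / 2 * Real.exp (-2 * t))
                = A / 2 * (Real.exp t * Real.exp (-2 * t)) by ring, ← Real.exp_add]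
              ring_nf
      · simpa using Real.tendsto_exp_neg_atTop_nhds_zero.const_mul (A / 2)
    have tendX : Tendsto Xf atTop (nhds 0) := by
      have h := (tendU.add tendW).const_smul ((2:ℝ)⁻¹)
      simp only [add_zero, smul_zero] at h
      apply h.congr
      intro t
      have h2 : Xf t + Vf t + (Xf t - Vf t) = (2:ℝ) • Xf t := by module
      rw [h2, smul_smul]; norm_num
    have tendV : Tendsto Vf atTop (nhds 0) := by
      have h := (tendU.sub tendW).const_smul ((2:ℝ)⁻¹)
      simp only [sub_zero, smul_zero] at h
      apply h.congr
      intro t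
      have h2 : Xf t + Vf t - (Xf t - Vf t) = (2:ℝ) • Vf t := by module
      rw [h2, smul_smul]; norm_num
    exact tendX.prodMk_nhds tendV
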